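/- Let φ : (0,∞) → ℝ be twice continuously differentiable and suppose that for all t > 0 one has φ̇(t) < 2/3 and φ̈(t) > φ̇(t)²(1 − φ̇(t))/(2 − 3φ̇(t)). Then φ̇(t) < 0 for all t > 0. -/

import Mathlib

open Set Real Filter Topology

/-- if φ is C² on (0,∞) and for all t > 0 one has φ̇(t) < 2/3 and
φ̈(t) > φ̇(t)²(1 − φ̇(t))/(2 − 3φ̇(t)), then φ̇(t) < 0 for all t > 0. -/
theorem deriv_neg_of_posdef_conditions (φ : ℝ → ℝ) (hφ : ContDiffOn ℝ 2 φ (Set.Ioi 0))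
    (h1 : ∀ t : ℝ, 0 < t → deriv φ t < 2/3)
    (h2 : ∀ t : ℝ, 0 < t →
      deriv (deriv φ) t > (deriv φ t)^2 * (1 - deriv φ t) / (2 - 3 * deriv φ t)) :
    ∀ t : ℝ, 0 < t → deriv φ t < 0 := by
  set f := deriv φ with hf_def
  have hf1 : ContDiffOn ℝ 1 f (Ioi 0) := hφ.deriv_of_isOpen isOpen_Ioi (by norm_num)
  have hfd : ∀ s : ℝ, 0 < s → HasDerivAt f (deriv f s) s := fun s hs =>
    ((hf1.differentiableOn (by norm_num) s hs).differentiableAt (isOpen_Ioi.mem_nhds hs)).hasDerivAt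
  have hd_pos : ∀ s : ℝ, 0 < s → 0 ≤ f s → 0 < deriv f s := by
    intro s hs hfs
    have hgt := h2 s hs
    have h23 := h1 s hs
    have hnn : 0 ≤ (f s)^2 * (1 - f s) / (2 - 3 * f s) :=
      div_nonneg (by nlinarith) (by linarith)
    linarith
  have key_mono : ∀ a b : ℝ, 0 < a → a < b → (∀ u ∈ Ioo a b, 0 ≤ f u) → f a < f b := by
    intro a b ha hab hpos
    have hsm : StrictMonoOn f (Icc a b) := by
      apply strictMonoOn_of_deriv_pos (convex_Icc a b)
      · exact hf1.continuousOn.mono (fun u hu => lt_of_lt_of_le ha hu.1)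
      · intro x hx
        rw [interior_Icc] at hx
        exact hd_pos x (lt_trans ha hx.1) (hpos x hx)
    exact hsm (left_mem_Icc.2 hab.le) (right_mem_Icc.2 hab.le) hab
  intro t ht
  by_contra hcon
  push_neg at hcon
  -- step 1: find t₁ > t with f t₁ > 0
  have hdt : 0 < deriv f t := hd_pos t ht hcon
  have hslope := (hfd t ht)
  rw [hasDerivAt_iff_tendsto_slope] at hslope
  have hev : ∀ᶠ y in 𝓝[≠] t, 0 < slope f t y := hslope.eventually (eventually_gt_nhds hdt)
  have hev' : ∀ᶠ y in 𝓝[>] t, 0 < slope f t y :=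
    hev.filter_mono (nhdsWithin_mono t (fun y hy => ne_of_gt hy))
  obtain ⟨t₁, hslope_pos, ht₁_gt⟩ := (hev'.and eventually_mem_nhdsWithin).exists
  have ht₁_gt : t < t₁ := ht₁_gt
  have ht₁pos : 0 < t₁ := lt_trans ht ht₁_gt
  have hft₁ : 0 < f t₁ := by
    rw [slope_def_field] at hslope_pos
    have hy : 0 < t₁ - t := by linarith
    have := (div_pos_iff.1 hslope_pos)
    rcases this with ⟨h, _⟩ | ⟨_, h⟩
    · linarith
    · linarith
  -- step 2: f stays positive after t₁
  have hApos : ∀ s : ℝ, t₁ ≤ s → 0 < f s := by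
    intro s hs
    rcases eq_or_lt_of_le hs with rfl | hlt
    · exact hft₁
    by_contra hneg
    push_neg at hneg
    set S := Icc t₁ s ∩ f ⁻¹' (Iic 0) with hS_def
    have hS_closed : IsClosed S :=
      ContinuousOn.preimage_isClosed_of_isClosed
        (hf1.continuousOn.mono (fun u hu => lt_of_lt_of_le ht₁pos hu.1))
        isClosed_Icc isClosed_Iic
    have hS_ne : S.Nonempty := ⟨s, ⟨hlt.le, le_rfl⟩, hneg⟩
    have hS_bdd : BddBelow S := ⟨t₁, fun u hu => hu.1.1⟩
    set m := sInf S with hm_def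
    have hmS : m ∈ S := hS_closed.csInf_mem hS_ne hS_bdd
    have hm_t₁ : t₁ < m := by
      rcases lt_or_eq_of_le (hmS.1.1 : t₁ ≤ m) with h | h
      · exact h
      · exfalso
        have hm0 : f m ≤ 0 := hmS.2
        rw [← h] at hm0
        linarith
    have hlt' : f t₁ < f m := by
      apply key_mono t₁ m ht₁pos hm_t₁
      intro u hu
      by_contra hu0
      push_neg at hu0
      have huS : u ∈ S := ⟨⟨hu.1.le, le_trans hu.2.le hmS.1.2⟩, hu0.le⟩
      exact absurd (csInf_le hS_bdd huS) (not_le.2 hu.2)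
    have hm0 : f m ≤ 0 := hmS.2
    linarith
  have hmono : ∀ s : ℝ, t₁ ≤ s → f t₁ ≤ f s := by
    intro s hs
    rcases eq_or_lt_of_le hs with rfl | hlt
    · exact le_rfl
    · exact (key_mono t₁ s ht₁pos hlt (fun u hu => (hApos u hu.1.le).le)).le
  -- the Lyapunov-type function
  set H : ℝ → ℝ := fun u => Real.log (1 - f u) - Real.log (f u) - 2 / f u with hH_def
  have hH_deriv : ∀ x : ℝ, t₁ ≤ x →
      HasDerivAt H (deriv f x * ((2 - 3 * f x) / ((f x)^2 * (1 - f x)))) x := by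
    intro x hx
    have hx0 : 0 < x := lt_of_lt_of_le ht₁pos hx
    have hfx : 0 < f x := hApos x hx
    have hfx2 : f x < 2/3 := h1 x hx0
    have h1f : 0 < 1 - f x := by linarith
    have hd := hfd x hx0
    have hA : HasDerivAt (fun u => Real.log (1 - f u)) ((0 - deriv f x) / (1 - f x)) x :=
      ((hasDerivAt_const x (1:ℝ)).sub hd).log (ne_of_gt h1f)
    have hB : HasDerivAt (fun u => Real.log (f u)) (deriv f x / f x) x :=
      hd.log (ne_of_gt hfx)
    have hinv : HasDerivAt (fun u => (f u)⁻¹) (-(deriv f x) / (f x)^2) x :=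
      hd.inv (ne_of_gt hfx)
    have hC : HasDerivAt (fun u => 2 / f u) (2 * (-(deriv f x) / (f x)^2)) x := by
      simpa [div_eq_mul_inv] using hinv.const_mul (2:ℝ)
    have hcomb := (hA.sub hB).sub hC
    refine hcomb.congr_deriv ?_
    field_simp
    ring
  have hHgt : ∀ x : ℝ, t₁ ≤ x →
      1 < deriv f x * ((2 - 3 * f x) / ((f x)^2 * (1 - f x))) := by
    intro x hx
    have hx0 : 0 < x := lt_of_lt_of_le ht₁pos hx
    have hfx : 0 < f x := hApos x hx
    have hfx2 : f x < 2/3 := h1 x hx0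
    have h1f : 0 < 1 - f x := by linarith
    have h23 : 0 < 2 - 3 * f x := by linarith
    have hden : 0 < (f x)^2 * (1 - f x) := mul_pos (pow_pos hfx 2) h1f
    have hgt := h2 x hx0
    rw [gt_iff_lt, div_lt_iff₀ h23] at hgt
    rw [← mul_div_assoc, lt_div_iff₀ hden, one_mul]
    linarith
  -- upper bound for H
  have hH_bound : ∀ x : ℝ, t₁ ≤ x → H x ≤ -Real.log (f t₁) := by
    intro x hx
    have hx0 : 0 < x := lt_of_lt_of_le ht₁pos hx
    have hfx : 0 < f x := hApos x hx
    have hfx2 : f x < 2/3 := h1 x hx0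
    have hlog1 : Real.log (1 - f x) ≤ 0 := Real.log_nonpos (by linarith) (by linarith)
    have hlog2 : Real.log (f t₁) ≤ Real.log (f x) := Real.log_le_log hft₁ (hmono x hx)
    have hdiv : 0 ≤ 2 / f x := div_nonneg (by norm_num) hfx.le
    simp only [hH_def]
    linarith
  -- conclude via growth of L := H - id
  set M := -Real.log (f t₁) with hM_def
  set s := t₁ + (M - H t₁) + 1 with hs_def
  have hBt₁ : H t₁ ≤ M := hH_bound t₁ le_rfl
  have hs_gt : t₁ < s := by simp only [hs_def]; linarith
  set L : ℝ → ℝ := fun u => H u - u with hL_def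
  have hLmono : StrictMonoOn L (Icc t₁ s) := by
    apply strictMonoOn_of_deriv_pos (convex_Icc t₁ s)
    · intro x hx
      exact (((hH_deriv x hx.1).sub (hasDerivAt_id x)).continuousAt).continuousWithinAt
    · intro x hx
      rw [interior_Icc] at hx
      have hder : HasDerivAt L (deriv f x * ((2 - 3 * f x) / ((f x)^2 * (1 - f x))) - 1) x := by
        exact (hH_deriv x hx.1.le).sub (hasDerivAt_id x)
      rw [hder.deriv]
      have := hHgt x hx.1.le
      simpa using sub_pos.2 this
  have hLs : L t₁ < L s :=
    hLmono (left_mem_Icc.2 hs_gt.le) (right_mem_Icc.2 hs_gt.le) hs_gt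
  have hHs : H s ≤ M := hH_bound s hs_gt.le
  simp only [hL_def] at hLs
  have : H t₁ - t₁ < H s - s := hLs
  simp only [hs_def] at this
  linarith
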